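/- Let β ∈ ℝ^{m×m}, ψ ∈ ℝ^m, and suppose ker{ψᵀ exp(βτ) : τ ≥ 0} = {0}, i.e., the only ξ ∈ ℝ^m with ψᵀ exp(βτ) ξ = 0 for all τ ≥ 0 is ξ = 0. Then there exist 0 ≤ τ₁ < τ₂ < ⋯ < τ_m such that the row vectors ψᵀ exp(β τ₁), …, ψᵀ exp(β τ_m) are linearly independent in ℝ^{1×m}. -/

import Mathlib

open Matrix

/-- If the term structure kernel is zero, there exist `0 ≤ τ₁ < ⋯ < τ_m` such that
the row vectors `ψᵀ exp(β τᵢ)` are linearly independent. -/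
theorem stmt_7 {m : ℕ} (β : Matrix (Fin m) (Fin m) ℝ) (ψ : Fin m → ℝ)
    (hker : ∀ ξ : Fin m → ℝ,
      (∀ τ ≥ (0 : ℝ), ψ ⬝ᵥ (NormedSpace.exp (τ • β)).mulVec ξ = 0) → ξ = 0) :
    ∃ τ : Fin m → ℝ, (∀ i, 0 ≤ τ i) ∧ StrictMono τ ∧
      LinearIndependent ℝ (fun i => Matrix.vecMul ψ (NormedSpace.exp (τ i • β))) := by
  classical
  set g : ℝ → (Fin m → ℝ) := fun t => Matrix.vecMul ψ (NormedSpace.exp (t • β)) with hg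
  -- Step 1: the span of the image of `g` over `[0,∞)` is everything.
  have hspan : Submodule.span ℝ (g '' {t : ℝ | 0 ≤ t}) = ⊤ := by
    by_contra h
    obtain ⟨f, hf0, hf⟩ :=
      Submodule.exists_le_ker_of_lt_top _ (lt_top_iff_ne_top.2 h)
    set ξ : Fin m → ℝ := fun i => f (Pi.single i 1) with hξ
    have hfx : ∀ x : Fin m → ℝ, f x = x ⬝ᵥ ξ := by
      intro x
      conv_lhs => rw [pi_eq_sum_univ x]
      rw [map_sum]
      rw [hξ, dotProduct]
      refine Finset.sum_congr rfl fun i _ => ?_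
      rw [_root_.map_smul, smul_eq_mul]
      congr 2
      ext j
      simp [Pi.single_apply, eq_comm]
    have hξ0 : ξ = 0 := by
      apply hker
      intro τ hτ
      have hmem : g τ ∈ Submodule.span ℝ (g '' {t : ℝ | 0 ≤ t}) :=
        Submodule.subset_span ⟨τ, hτ, rfl⟩
      have := hf hmem
      rw [LinearMap.mem_ker, hfx] at this
      rw [Matrix.dotProduct_mulVec]
      exact this
    apply hf0
    apply LinearMap.ext
    intro x
    rw [hfx, hξ0]
    simp
  -- Step 2: extract a linearly independent spanning subset `b`.
  obtain ⟨b, hbS, hbspan, hbli⟩ := exists_linearIndependent ℝ (g '' {t : ℝ | 0 ≤ t})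
  rw [hspan] at hbspan
  have hfin : b.Finite := hbli.setFinite
  haveI : Fintype b := hfin.fintype
  have hcardb : Fintype.card b = m := by
    have h2 := Module.finrank_eq_card_basis
      (Module.Basis.mk hbli (by rw [Subtype.range_val, hbspan]))
    rw [Module.finrank_fin_fun ℝ] at h2
    rw [← h2]
  -- Step 3: choose parameters for each element of `b`.
  choose c hc0 hcg using fun x : b => hbS x.2
  have hcinj : Function.Injective c := by
    intro x y hxy
    have : g (c x) = g (c y) := by rw [hxy]
    rw [hcg, hcg] at this
    exact Subtype.ext this
  set T : Finset ℝ := Finset.image c Finset.univ with hT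
  have hTcard : T.card = m := by
    rw [hT, Finset.card_image_of_injective _ hcinj, Finset.card_univ, hcardb]
  -- Step 4: sort them.
  set σ : Fin m ≃o T := T.orderIsoOfFin hTcard with hσ
  refine ⟨fun i => (σ i : ℝ), ?_, ?_, ?_⟩
  · intro i
    show (0 : ℝ) ≤ (σ i : ℝ)
    obtain ⟨x, -, hx⟩ := Finset.mem_image.1 (σ i).2
    rw [← hx]
    exact hc0 x
  · intro i j hij
    exact Subtype.coe_lt_coe.mpr (σ.strictMono hij)
  · -- linear independence: the family is a reindexing of `b`.
    have hmem : ∀ i : Fin m, g (σ i : ℝ) ∈ b := by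
      intro i
      obtain ⟨x, -, hx⟩ := Finset.mem_image.1 (σ i).2
      rw [← hx, hcg]
      exact x.2
    set e : Fin m → b := fun i => ⟨g (σ i : ℝ), hmem i⟩ with he
    have heinj : Function.Injective e := by
      intro i j hij
      have hgij : g (σ i : ℝ) = g (σ j : ℝ) := congrArg Subtype.val hij
      obtain ⟨x, -, hx⟩ := Finset.mem_image.1 (σ i).2
      obtain ⟨y, -, hy⟩ := Finset.mem_image.1 (σ j).2
      have hxy : x = y := by
        apply Subtype.ext
        rw [← hcg x, ← hcg y, hx, hy]
        exact hgij
      have : (σ i : ℝ) = (σ j : ℝ) := by rw [← hx, ← hy, hxy]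
      exact σ.injective (Subtype.ext this)
    have := hbli.comp e heinj
    exact this
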